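/- (Frictionless decomposition of a sliding frictional force) Let J_n ∈ ℝ^{1×n}, J_t ∈ ℝ^{2×n}, μ > 0, and let d̂ ∈ ℝ² be a unit vector. For any δ > 0 there exist three vectors d₁, d₂, d₃ ∈ ℝ² with ‖dᵢ + μ d̂‖ < δ such that −μ d̂ lies in the interior of hull{d₁, d₂, d₃}; consequently, for every unit vector u ∈ ℝ² sufficiently close to d̂, the vector J_nᵀ − μ J_tᵀ u lies in hull{ J_nᵀ + J_tᵀ d₁, J_nᵀ + J_tᵀ d₂, J_nᵀ + J_tᵀ d₃ }. -/
import Mathlib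

lemma comboMem {E : Type*} [AddCommGroup E] [Module ℝ E]
    (v₁ v₂ v₃ : E) (w₁ w₂ w₃ : ℝ) (h₁ : 0 ≤ w₁) (h₂ : 0 ≤ w₂) (h₃ : 0 ≤ w₃)
    (hsum : w₁ + w₂ + w₃ = 1) :
    w₁ • v₁ + w₂ • v₂ + w₃ • v₃ ∈ convexHull ℝ ({v₁, v₂, v₃} : Set E) := by
  have h : (Finset.univ : Finset (Fin 3)).centerMass ![w₁, w₂, w₃] ![v₁, v₂, v₃]
      ∈ convexHull ℝ ({v₁, v₂, v₃} : Set E) :=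
    Finset.centerMass_mem_convexHull _
      (by intro i _; fin_cases i <;> simpa)
      (by simp [Fin.sum_univ_three, hsum])
      (by intro i _; fin_cases i <;> simp [Set.mem_insert_iff])
  simpa [Finset.centerMass, Fin.sum_univ_three, hsum] using h

lemma coordDecomp (v : EuclideanSpace ℝ (Fin 2)) :
    v = v 0 • (EuclideanSpace.single 0 1) + v 1 • (EuclideanSpace.single 1 1) := by
  ext i
  fin_cases i <;> simp [EuclideanSpace.single_apply]

lemma coordLe (v : EuclideanSpace ℝ (Fin 2)) (i : Fin 2) : |v i| ≤ ‖v‖ := by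
  rw [EuclideanSpace.norm_eq, ← Real.sqrt_sq_eq_abs]
  apply Real.sqrt_le_sqrt
  exact Finset.single_le_sum (f := fun j => ‖v j‖ ^ 2) (fun j _ => by positivity)
    (Finset.mem_univ i) |>.trans_eq' (by simp [sq_abs])

lemma triCombo {E : Type*} [AddCommGroup E] [Module ℝ E]
    (c e0 e1 : E) (a s x y w₁ w₂ w₃ : ℝ) (hsum : w₁ + w₂ + w₃ = 1)
    (hx : w₁ * a + w₂ * (-(a/2)) + w₃ * (-(a/2)) = x)
    (hy : w₂ * (a*s/2) + w₃ * (-(a*s/2)) = y) :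
    c + x • e0 + y • e1
      = w₁ • (c + a • e0) + w₂ • (c + (-(a/2)) • e0 + (a*s/2) • e1)
        + w₃ • (c + (-(a/2)) • e0 + (-(a*s/2)) • e1) := by
  linear_combination (norm := module) hsum.symm • c + hx.symm • e0 + hy.symm • e1

/-- Key ball lemma: every point within `a/4` of the center `c` is an explicit convex
combination of the three triangle vertices. -/
lemma ballCombo (c : EuclideanSpace ℝ (Fin 2)) (a : ℝ) (ha : 0 < a)
    (p : EuclideanSpace ℝ (Fin 2)) (hp : ‖p - c‖ ≤ a / 4) :
    ∃ w₁ w₂ w₃ : ℝ, 0 ≤ w₁ ∧ 0 ≤ w₂ ∧ 0 ≤ w₃ ∧ w₁ + w₂ + w₃ = 1 ∧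
      p = w₁ • (c + a • (EuclideanSpace.single 0 1))
        + w₂ • (c + (-(a/2)) • (EuclideanSpace.single 0 1)
              + (a * Real.sqrt 3 / 2) • (EuclideanSpace.single 1 1))
        + w₃ • (c + (-(a/2)) • (EuclideanSpace.single 0 1)
              + (-(a * Real.sqrt 3 / 2)) • (EuclideanSpace.single 1 1)) := by
  set s := Real.sqrt 3 with hs
  have hs1 : 1 ≤ s := by
    rw [hs, show (1:ℝ) = Real.sqrt 1 by simp]
    exact Real.sqrt_le_sqrt (by norm_num)
  have hs0 : 0 < s := lt_of_lt_of_le one_pos hs1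
  set x := (p - c) 0 with hxdef
  set y := (p - c) 1 with hydef
  have hx : |x| ≤ a / 4 := (coordLe (p - c) 0).trans hp
  have hy : |y| ≤ a / 4 := (coordLe (p - c) 1).trans hp
  rw [abs_le] at hx hy
  have ha' : a ≠ 0 := ne_of_gt ha
  have hs' : s ≠ 0 := ne_of_gt hs0
  have hpdec : p = c + x • (EuclideanSpace.single 0 1) + y • (EuclideanSpace.single 1 1) := by
    ext i
    fin_cases i <;>
      simp [hxdef, hydef, EuclideanSpace.single_apply, PiLp.sub_apply] <;> ring
  refine ⟨(a + 2*x)/(3*a), (a*s - x*s + 3*y)/(3*a*s), (a*s - x*s - 3*y)/(3*a*s),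
    ?_, ?_, ?_, ?_, ?_⟩
  · apply div_nonneg _ (by positivity); nlinarith
  · apply div_nonneg _ (by positivity); nlinarith
  · apply div_nonneg _ (by positivity); nlinarith
  · field_simp; ring
  · have hsum : (a + 2*x)/(3*a) + (a*s - x*s + 3*y)/(3*a*s) + (a*s - x*s - 3*y)/(3*a*s) = 1 := by
      field_simp; ring
    have hxeq : ((a + 2*x)/(3*a)) * a + ((a*s - x*s + 3*y)/(3*a*s)) * (-(a/2))
        + ((a*s - x*s - 3*y)/(3*a*s)) * (-(a/2)) = x := by
      field_simp; ring
    have hyeq : ((a*s - x*s + 3*y)/(3*a*s)) * (a*s/2)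
        + ((a*s - x*s - 3*y)/(3*a*s)) * (-(a*s/2)) = y := by
      field_simp; ring
    rw [hpdec]
    have := triCombo c (EuclideanSpace.single (0 : Fin 2) (1:ℝ))
      (EuclideanSpace.single (1 : Fin 2) (1:ℝ)) a s x y _ _ _ hsum hxeq hyeq
    convert this using 3 <;> ring

/-- Frictionless decomposition of a sliding frictional force (Figure 4 /
Case 2 of Theorem 5): the force `-μ d̂` can be enclosed in the interior of an
arbitrarily small triangle `hull{d₁,d₂,d₃}`, and consequently the frictional
net force `J_nᵀ - μ J_tᵀ u`, for any unit `u` close enough to `d̂`, lies in the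
convex hull of the three frictionless net forces `J_nᵀ + J_tᵀ dᵢ`. -/
theorem frictionless_decomposition {n : ℕ}
    (jn : EuclideanSpace ℝ (Fin n))
    (Jt : EuclideanSpace ℝ (Fin n) →L[ℝ] EuclideanSpace ℝ (Fin 2))
    (μ : ℝ) (hμ : 0 < μ)
    (dhat : EuclideanSpace ℝ (Fin 2)) (hdhat : ‖dhat‖ = 1)
    (δ : ℝ) (hδ : 0 < δ) :
    ∃ d₁ d₂ d₃ : EuclideanSpace ℝ (Fin 2),
      ‖d₁ + μ • dhat‖ < δ ∧ ‖d₂ + μ • dhat‖ < δ ∧ ‖d₃ + μ • dhat‖ < δ ∧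
      -(μ • dhat) ∈ interior (convexHull ℝ {d₁, d₂, d₃}) ∧
      ∃ η > (0 : ℝ), ∀ u : EuclideanSpace ℝ (Fin 2), ‖u‖ = 1 → ‖u - dhat‖ < η →
        jn - μ • (ContinuousLinearMap.adjoint Jt) u ∈
          convexHull ℝ {jn + (ContinuousLinearMap.adjoint Jt) d₁,
                        jn + (ContinuousLinearMap.adjoint Jt) d₂,
                        jn + (ContinuousLinearMap.adjoint Jt) d₃} := by
  set T := ContinuousLinearMap.adjoint Jt with hT
  set c : EuclideanSpace ℝ (Fin 2) := -(μ • dhat) with hc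
  set a : ℝ := δ / 2 with haa
  have ha : 0 < a := by positivity
  set s : ℝ := Real.sqrt 3 with hs
  have hs3 : s ^ 2 = 3 := Real.sq_sqrt (by norm_num)
  set e0 : EuclideanSpace ℝ (Fin 2) := EuclideanSpace.single 0 1 with he0
  set e1 : EuclideanSpace ℝ (Fin 2) := EuclideanSpace.single 1 1 with he1
  set d₁ : EuclideanSpace ℝ (Fin 2) := c + a • e0 with hd₁
  set d₂ : EuclideanSpace ℝ (Fin 2) := c + (-(a/2)) • e0 + (a * s / 2) • e1 with hd₂
  set d₃ : EuclideanSpace ℝ (Fin 2) := c + (-(a/2)) • e0 + (-(a * s / 2)) • e1 with hd₃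
  -- the three norm bounds
  have hn₁ : ‖d₁ + μ • dhat‖ < δ := by
    have h : d₁ + μ • dhat = a • e0 := by rw [hd₁, hc]; module
    rw [h, norm_smul, he0, EuclideanSpace.norm_single]
    simp [abs_of_pos ha]
    linarith
  have hnorm23 : ∀ ε : ℝ, ε = 1 ∨ ε = -1 →
      ‖(-(a/2)) • e0 + (ε * (a * s / 2)) • e1‖ = a := by
    intro ε hε
    have hε2 : ε ^ 2 = 1 := by rcases hε with h | h <;> rw [h] <;> norm_num
    have h00 : ((-(a/2)) • e0 + (ε * (a * s / 2)) • e1) 0 = -(a/2) := by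
      simp [he0, he1, EuclideanSpace.single_apply]
    have h01 : ((-(a/2)) • e0 + (ε * (a * s / 2)) • e1) 1 = ε * (a * s / 2) := by
      simp [he0, he1, EuclideanSpace.single_apply]
    rw [EuclideanSpace.norm_eq, Fin.sum_univ_two, h00, h01,
      Real.norm_eq_abs, Real.norm_eq_abs, sq_abs, sq_abs,
      show (-(a/2))^2 + (ε * (a * s / 2))^2 = a ^ 2 from by
        linear_combination (a^2*s^2/4) * hε2 + (a^2/4) * hs3]
    exact Real.sqrt_sq ha.le
  have hn₂ : ‖d₂ + μ • dhat‖ < δ := by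
    have h : d₂ + μ • dhat = (-(a/2)) • e0 + ((1:ℝ) * (a * s / 2)) • e1 := by
      rw [hd₂, hc]; module
    rw [h, hnorm23 1 (Or.inl rfl)]; linarith
  have hn₃ : ‖d₃ + μ • dhat‖ < δ := by
    have h : d₃ + μ • dhat = (-(a/2)) • e0 + ((-1:ℝ) * (a * s / 2)) • e1 := by
      rw [hd₃, hc]; module
    rw [h, hnorm23 (-1) (Or.inr rfl)]; linarith
  -- every point within a/4 of c lies in the hull
  have hball : ∀ p : EuclideanSpace ℝ (Fin 2), ‖p - c‖ ≤ a / 4 →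
      p ∈ convexHull ℝ ({d₁, d₂, d₃} : Set (EuclideanSpace ℝ (Fin 2))) := by
    intro p hp
    obtain ⟨w₁, w₂, w₃, h₁, h₂, h₃, hsum, hpc⟩ := ballCombo c a ha p hp
    rw [show p = w₁ • d₁ + w₂ • d₂ + w₃ • d₃ from by
      rw [hd₁, hd₂, hd₃, he0, he1]; exact hpc]
    exact comboMem _ _ _ _ _ _ h₁ h₂ h₃ hsum
  refine ⟨d₁, d₂, d₃, hn₁, hn₂, hn₃, ?_, ?_⟩
  · exact mem_interior.2 ⟨Metric.ball c (a/4),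
      fun p hp => hball p (by rw [← dist_eq_norm]; exact (Metric.mem_ball.1 hp).le),
      Metric.isOpen_ball, Metric.mem_ball_self (by positivity)⟩
  · refine ⟨a / (4 * μ), by positivity, fun u hu hclose => ?_⟩
    -- extract explicit weights
    obtain ⟨w₁, w₂, w₃, h₁, h₂, h₃, hsum, hpc⟩ := ballCombo c a ha (-(μ • u))
      (by
        have h : -(μ • u) - c = μ • (dhat - u) := by rw [hc]; module
        rw [h, norm_smul, Real.norm_eq_abs, abs_of_pos hμ, norm_sub_rev]
        calc μ * ‖u - dhat‖ ≤ μ * (a / (4 * μ)) := by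
              apply mul_le_mul_of_nonneg_left hclose.le hμ.le
          _ = a / 4 := by
              rw [mul_comm (4:ℝ) μ, ← div_div, mul_div_assoc', mul_comm μ (a / μ),
                div_mul_cancel₀ _ hμ.ne'])
    have hcmb : -(μ • u) = w₁ • d₁ + w₂ • d₂ + w₃ • d₃ := by
      rw [hd₁, hd₂, hd₃, he0, he1]; exact hpc
    have key : jn - μ • T u = w₁ • (jn + T d₁) + w₂ • (jn + T d₂) + w₃ • (jn + T d₃) := by
      have hTc : T (-(μ • u)) = w₁ • T d₁ + w₂ • T d₂ + w₃ • T d₃ := by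
        rw [hcmb]; simp [map_add, map_smul]
      rw [map_neg, map_smul] at hTc
      linear_combination (norm := module) hsum.symm • jn + hTc
    rw [key]
    exact comboMem _ _ _ _ _ _ h₁ h₂ h₃ hsum
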